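/- arXiv:1610.02315 — 3 statements merged into one kernel-verified Lean document; each statement's English description precedes it below -/
import Mathlib

section
/- Let F be a field which is a ℚ-algebra, let σ : F ≃+* F be a ring automorphism whose fixed subfield is exactly the image of ℚ (i.e. for all x ∈ F, σ(x) = x implies x lies in the range of the algebra map ℚ → F), and let a, b ∈ ℚ. Let x be an element of the quaternion algebra ℍ[F, a, b] over F, and let σ̂ denote the map applying σ to each of the four components of a quaternion. If σ̂(x) = star x (quaternion conjugation), then x · star x is the image of a rational number, i.e. there exists q ∈ ℚ with x · star x = algebraMap ℚ ℍ[F,a,b] (q). -/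
open scoped Quaternion

/-- If `F` is a `ℚ`-algebra field, `σ : F ≃+* F` has fixed field exactly the
image of `ℚ`, and `x` is an element of the quaternion algebra `ℍ[F, a, b]`
(with `a, b` rational) such that applying `σ` componentwise to `x` gives the
quaternion conjugate `star x`, then `x * star x` (the reduced norm) is the
image of a rational number. -/
theorem rational_reduced_norm_of_galois_conjugate_eq_star
    {F : Type*} [Field F] [Algebra ℚ F] (σ : F ≃+* F)
    (hσ : ∀ x : F, σ x = x → x ∈ (algebraMap ℚ F).range)
    (a b : ℚ)
    (x : ℍ[F, algebraMap ℚ F a, algebraMap ℚ F b])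
    (hx : (⟨σ x.re, σ x.imI, σ x.imJ, σ x.imK⟩ :
        ℍ[F, algebraMap ℚ F a, algebraMap ℚ F b]) = star x) :
    ∃ q : ℚ, x * star x = algebraMap ℚ ℍ[F, algebraMap ℚ F a, algebraMap ℚ F b] q := by
  have hre : σ x.re = x.re := by simpa using congrArg QuaternionAlgebra.re hx
  have hI : σ x.imI = -x.imI := congrArg QuaternionAlgebra.imI hx
  have hJ : σ x.imJ = -x.imJ := congrArg QuaternionAlgebra.imJ hx
  have hK : σ x.imK = -x.imK := congrArg QuaternionAlgebra.imK hx
  set n : F := (x * star x).re with hn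
  have hσa : ∀ q : ℚ, σ (algebraMap ℚ F q) = algebraMap ℚ F q := by
    intro q
    rw [show algebraMap ℚ F q = (q : F) from eq_ratCast (algebraMap ℚ F) q, map_ratCast]
  have hfix : σ n = n := by
    have : n = x.re * x.re - algebraMap ℚ F a * (x.imI * x.imI)
        - algebraMap ℚ F b * (x.imJ * x.imJ)
        + algebraMap ℚ F a * algebraMap ℚ F b * (x.imK * x.imK) := by
      simp [hn, QuaternionAlgebra.re_mul]
      ring
    rw [this]
    simp only [map_add, map_sub, map_mul, hre, hI, hJ, hK, hσa]
    ring
  obtain ⟨q, hq⟩ := hσ n hfix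
  refine ⟨q, ?_⟩
  have hdef : algebraMap ℚ ℍ[F, algebraMap ℚ F a, algebraMap ℚ F b] q
      = ((algebraMap ℚ F q : F) : ℍ[F, algebraMap ℚ F a, algebraMap ℚ F b]) := rfl
  rw [QuaternionAlgebra.mul_star_eq_coe, hdef, hq]
end

section
/- Let s be a real number with s > 1, let m be a squarefree positive integer, and let χ : ℕ → ℝ be a multiplicative function (χ(1) = 1 and χ(uv) = χ(u)χ(v) for coprime u, v) such that χ(p) ∈ {−1, 1} for every prime p dividing m. Then |∑_{d ∣ m} χ(d) · d^s| ≥ m^s · ∏_{p prime} (1 − p^{−s}), where the product on the right is the convergent infinite product over all primes (equal to 1/ζ(s)). In particular the sum is nonzero. -/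
open Real Finset

section aux

variable (s : ℝ)

private lemma aux_g_pos (hs : 1 < s) (p : Nat.Primes) : 0 < 1 - (p : ℝ) ^ (-s) := by
  have h1 : (1 : ℝ) < (p : ℕ) := by exact_mod_cast p.prop.one_lt
  have := Real.rpow_lt_one_of_one_lt_of_neg h1 (by linarith : -s < 0)
  linarith

private lemma aux_log_summable (hs : 1 < s) :
    Summable fun p : Nat.Primes => Real.log (1 - (p : ℝ) ^ (-s)) := by
  have hsum : Summable fun p : Nat.Primes => ((p : ℕ) : ℝ) ^ (-s) :=
    Nat.Primes.summable_rpow.mpr (by linarith)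
  rw [← summable_neg_iff]
  refine Summable.of_nonneg_of_le (fun p => ?_) (fun p => ?_) (hsum.mul_left 2)
  · have hg := aux_g_pos s hs p
    have : Real.log (1 - (p : ℝ) ^ (-s)) ≤ 0 := by
      apply Real.log_nonpos (by linarith)
      have : (0 : ℝ) ≤ (p : ℝ) ^ (-s) := Real.rpow_nonneg (by positivity) _
      linarith
    linarith
  · -- -log(1-x) ≤ 2x for x ≤ 1/2
    set x : ℝ := ((p : ℕ) : ℝ) ^ (-s) with hx
    have hx0 : 0 < x := Real.rpow_pos_of_pos (by exact_mod_cast p.prop.pos) _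
    have hxhalf : x ≤ 1 / 2 := by
      have h2p : (2 : ℝ) ≤ ((p : ℕ) : ℝ) := by exact_mod_cast p.prop.two_le
      have h1 : ((p : ℕ) : ℝ) ^ (-s) ≤ (2 : ℝ) ^ (-s) :=
        Real.rpow_le_rpow_of_nonpos (by norm_num) h2p (by linarith)
      have h2 : (2 : ℝ) ^ (-s) ≤ (2 : ℝ) ^ (-1 : ℝ) :=
        Real.rpow_le_rpow_of_exponent_le (by norm_num) (by linarith)
      rw [hx]
      calc ((p : ℕ) : ℝ) ^ (-s) ≤ (2 : ℝ) ^ (-s) := h1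
        _ ≤ (2 : ℝ) ^ (-1 : ℝ) := h2
        _ = 1 / 2 := by rw [Real.rpow_neg_one]; norm_num
    have hg : 0 < 1 - x := by linarith
    have hlog : Real.log (1 - x) ≥ -(2 * x) := by
      have hinv : Real.log (1 - x)⁻¹ ≤ (1 - x)⁻¹ - 1 :=
        Real.log_le_sub_one_of_pos (by positivity)
      rw [Real.log_inv] at hinv
      have hinvle : (1 - x)⁻¹ ≤ 2 := by
        rw [inv_le_comm₀ hg (by norm_num)]
        linarith
      have : (1 - x)⁻¹ - 1 = x * (1 - x)⁻¹ := by
        field_simp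
        ring
      rw [this] at hinv
      nlinarith [mul_le_mul_of_nonneg_left hinvle hx0.le]
    linarith

private lemma aux_tprod_eq (hs : 1 < s) :
    (∏' p : Nat.Primes, (1 - (p : ℝ) ^ (-s)))
      = Real.exp (∑' p : Nat.Primes, Real.log (1 - (p : ℝ) ^ (-s))) := by
  have key := Real.rexp_tsum_eq_tprod (ι := Nat.Primes)
    (f := fun p => 1 - (p : ℝ) ^ (-s))
    (fun p => aux_g_pos s hs p) (aux_log_summable s hs)
  exact key.symm

end aux

/-- For `s > 1`, a squarefree positive integer `m`, and a multiplicative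
function `χ` taking values `±1` on the primes dividing `m`, the twisted
divisor sum `∑_{d ∣ m} χ(d)·d^s` has absolute value at least
`m^s · ∏_p (1 − p^{−s})`; in particular it is nonzero. -/
theorem twisted_divisor_sum_lower_bound
    (s : ℝ) (hs : 1 < s) (m : ℕ) (hm : 0 < m) (hsq : Squarefree m)
    (χ : ℕ → ℝ) (hχ1 : χ 1 = 1)
    (hχmul : ∀ u v : ℕ, Nat.Coprime u v → χ (u * v) = χ u * χ v)
    (hχp : ∀ p : ℕ, p.Prime → p ∣ m → χ p = 1 ∨ χ p = -1) :
    (m : ℝ) ^ s * (∏' p : Nat.Primes, (1 - (p : ℝ) ^ (-s)))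
        ≤ |∑ d ∈ m.divisors, χ d * (d : ℝ) ^ s| ∧
      ∑ d ∈ m.divisors, χ d * (d : ℝ) ^ s ≠ 0 := by
  classical
  set g : Nat.Primes → ℝ := fun p => 1 - (p : ℝ) ^ (-s) with hg
  -- Step 1: factor the divisor sum
  have hsne : s ≠ 0 := by linarith
  set F : ArithmeticFunction ℝ :=
    ⟨fun d => χ d * (d : ℝ) ^ s, by simp [Real.zero_rpow hsne]⟩ with hF
  have hFmult : F.IsMultiplicative := by
    refine ⟨by simp [hF, hχ1], fun {u v} huv => ?_⟩
    simp only [hF, ArithmeticFunction.coe_mk, Nat.cast_mul]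
    rw [hχmul u v huv, Real.mul_rpow (Nat.cast_nonneg u) (Nat.cast_nonneg v)]
    ring
  have hfactor : ∑ d ∈ m.divisors, χ d * (d : ℝ) ^ s
      = ∏ p ∈ m.primeFactors, (1 + χ p * (p : ℝ) ^ s) := by
    have h := hFmult.prodPrimeFactors_one_add_of_squarefree hsq
    simp only [hF, ArithmeticFunction.coe_mk] at h
    exact h.symm
  -- Step 2: lower-bound each factor
  have hps_ge : ∀ p ∈ m.primeFactors, (1 : ℝ) ≤ (p : ℝ) ^ s := by
    intro p hp
    have hpp := Nat.prime_of_mem_primeFactors hp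
    have h1p : (1 : ℝ) ≤ (p : ℝ) := by exact_mod_cast hpp.one_lt.le
    calc (1 : ℝ) = 1 ^ s := (Real.one_rpow s).symm
      _ ≤ (p : ℝ) ^ s := Real.rpow_le_rpow (by norm_num) h1p (by linarith)
  have habs_ge : ∀ p ∈ m.primeFactors,
      (p : ℝ) ^ s - 1 ≤ |1 + χ p * (p : ℝ) ^ s| := by
    intro p hp
    have hpp := Nat.prime_of_mem_primeFactors hp
    have h1 := hps_ge p hp
    rcases hχp p hpp (Nat.dvd_of_mem_primeFactors hp) with h | h
    · rw [h, one_mul, abs_of_nonneg (by linarith)]; linarith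
    · rw [h, neg_one_mul,
        show (1 + -(p : ℝ) ^ s) = -((p : ℝ) ^ s - 1) by ring, abs_neg,
        abs_of_nonneg (by linarith : (0:ℝ) ≤ (p : ℝ) ^ s - 1)]
  have hprod_ge : ∏ p ∈ m.primeFactors, ((p : ℝ) ^ s - 1)
      ≤ |∑ d ∈ m.divisors, χ d * (d : ℝ) ^ s| := by
    rw [hfactor, abs_prod]
    exact Finset.prod_le_prod (fun p hp => by linarith [hps_ge p hp]) habs_ge
  -- Step 3: rewrite the finite product
  have hsplit : ∏ p ∈ m.primeFactors, ((p : ℝ) ^ s - 1)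
      = (m : ℝ) ^ s * ∏ p ∈ m.primeFactors, (1 - (p : ℝ) ^ (-s)) := by
    have hfac : ∀ p ∈ m.primeFactors, ((p : ℝ) ^ s - 1)
        = (p : ℝ) ^ s * (1 - (p : ℝ) ^ (-s)) := by
      intro p hp
      have hpp := Nat.prime_of_mem_primeFactors hp
      have hp0 : (0 : ℝ) < (p : ℝ) := by exact_mod_cast hpp.pos
      have : (p : ℝ) ^ s * (p : ℝ) ^ (-s) = 1 := by
        rw [← Real.rpow_add hp0]; simp
      rw [mul_sub, mul_one, this]
    rw [Finset.prod_congr rfl hfac, Finset.prod_mul_distrib]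
    congr 1
    rw [Real.finset_prod_rpow _ _ (fun p _ => Nat.cast_nonneg p) s]
    congr 1
    rw [← Nat.cast_prod]
    exact congrArg (Nat.cast : ℕ → ℝ) (Nat.prod_primeFactors_of_squarefree hsq)
  -- Step 4: compare infinite product with finite product
  have hlogsum := aux_log_summable s hs
  set S : Finset Nat.Primes :=
    m.primeFactors.attach.image
      (fun p => (⟨p.1, Nat.prime_of_mem_primeFactors p.2⟩ : Nat.Primes)) with hS
  have hSprod : ∏ q ∈ S, g q = ∏ p ∈ m.primeFactors, (1 - (p : ℝ) ^ (-s)) := by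
    rw [hS]
    refine (Finset.prod_image (by
      intro a _ b _ hab
      exact Subtype.ext (congrArg (fun q : Nat.Primes => (q : ℕ)) hab))).trans ?_
    exact Finset.prod_attach m.primeFactors (fun n => 1 - (n : ℝ) ^ (-s))
  have htsum_le : (∑' p : Nat.Primes, Real.log (g p)) ≤ ∑ q ∈ S, Real.log (g q) := by
    have hnonneg : ∀ q : Nat.Primes, q ∉ S → 0 ≤ -Real.log (g q) := by
      intro q _
      have hpos := aux_g_pos s hs q
      have hle1 : g q ≤ 1 := by
        have : (0 : ℝ) ≤ (q : ℝ) ^ (-s) := Real.rpow_nonneg (by positivity) _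
        simp only [hg]; linarith
      have := Real.log_nonpos hpos.le hle1
      linarith
    have h1 : ∑ q ∈ S, -Real.log (g q) ≤ ∑' q : Nat.Primes, -Real.log (g q) :=
      Summable.sum_le_tsum S hnonneg hlogsum.neg
    rw [tsum_neg] at h1
    have h2 : ∑ q ∈ S, -Real.log (g q) = -∑ q ∈ S, Real.log (g q) := by
      rw [Finset.sum_neg_distrib]
    rw [h2] at h1
    linarith
  have htprod_le : (∏' p : Nat.Primes, g p) ≤ ∏ p ∈ m.primeFactors, (1 - (p : ℝ) ^ (-s)) := by
    rw [aux_tprod_eq s hs, ← hSprod]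
    calc Real.exp (∑' p : Nat.Primes, Real.log (g p))
        ≤ Real.exp (∑ q ∈ S, Real.log (g q)) := Real.exp_le_exp.mpr htsum_le
      _ = ∏ q ∈ S, Real.exp (Real.log (g q)) := Real.exp_sum S _
      _ = ∏ q ∈ S, g q :=
          Finset.prod_congr rfl (fun q _ => Real.exp_log (aux_g_pos s hs q))
  -- Step 5: combine
  have hms : (0 : ℝ) < (m : ℝ) ^ s :=
    Real.rpow_pos_of_pos (by exact_mod_cast hm) _
  have hmain : (m : ℝ) ^ s * (∏' p : Nat.Primes, g p)
      ≤ |∑ d ∈ m.divisors, χ d * (d : ℝ) ^ s| := by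
    calc (m : ℝ) ^ s * (∏' p : Nat.Primes, g p)
        ≤ (m : ℝ) ^ s * ∏ p ∈ m.primeFactors, (1 - (p : ℝ) ^ (-s)) :=
          mul_le_mul_of_nonneg_left htprod_le hms.le
      _ = ∏ p ∈ m.primeFactors, ((p : ℝ) ^ s - 1) := hsplit.symm
      _ ≤ _ := hprod_ge
  refine ⟨hmain, ?_⟩
  have htpos : (0 : ℝ) < ∏' p : Nat.Primes, g p := by
    rw [aux_tprod_eq s hs]; exact Real.exp_pos _
  intro h0
  rw [h0, abs_zero] at hmain
  nlinarith
end

section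
/- Let h : ℍ → ℂ be a holomorphic function on the upper half-plane that is modular of weight 2 for SL₂(ℤ), i.e. h((aτ+b)/(cτ+d)) = (cτ+d)²·h(τ) for all [[a,b],[c,d]] ∈ SL₂(ℤ) and τ ∈ ℍ. Suppose there exist M ∈ ℕ and coefficients a : ℤ → ℂ with a(n) = 0 for all n < −M, such that for every τ ∈ ℍ the series ∑_{n ∈ ℤ} a(n)·e^{2πinτ} converges (HasSum) to h(τ). Then the constant term vanishes: a(0) = 0. -/
open scoped UpperHalfPlane MatrixGroups Manifold Real

private lemma aux_norm_exp (n : ℤ) (z : ℂ) :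
    ‖Complex.exp (2 * (π:ℂ) * Complex.I * (n:ℂ) * z)‖ = Real.exp (-(2 * π * n * z.im)) := by
  rw [Complex.norm_exp]
  congr 1
  simp [Complex.mul_re, Complex.mul_im]

private lemma aux_S_pow_four : ModularGroup.S ^ 4 = 1 := by
  ext i j
  fin_cases i <;> fin_cases j <;>
    simp [ModularGroup.coe_S, pow_succ, Matrix.SpecialLinearGroup.coe_pow, Matrix.SpecialLinearGroup.coe_mul, Matrix.mul_apply,
      Fin.sum_univ_succ]

private lemma aux_ST_pow_six : (ModularGroup.S * ModularGroup.T) ^ 6 = 1 := by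
  ext i j
  fin_cases i <;> fin_cases j <;>
    simp [ModularGroup.coe_S, ModularGroup.coe_T, pow_succ, Matrix.SpecialLinearGroup.coe_pow, Matrix.SpecialLinearGroup.coe_mul,
      Matrix.mul_apply, Fin.sum_univ_succ]

private lemma aux_coe_smul (γ : SL(2, ℤ)) (τ : ℍ) :
    ((γ • τ : ℍ) : ℂ)
      = (((γ : Matrix (Fin 2) (Fin 2) ℤ) 0 0 : ℂ) * τ + ((γ : Matrix (Fin 2) (Fin 2) ℤ) 0 1 : ℂ))
        / (((γ : Matrix (Fin 2) (Fin 2) ℤ) 1 0 : ℂ) * τ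
            + ((γ : Matrix (Fin 2) (Fin 2) ℤ) 1 1 : ℂ)) := by
  rw [UpperHalfPlane.specialLinearGroup_apply]
  simp

private lemma aux_denom_ne_zero (γ : SL(2, ℤ)) (z : ℂ) (hz : 0 < z.im) :
    ((γ : Matrix (Fin 2) (Fin 2) ℤ) 1 0 : ℂ) * z + ((γ : Matrix (Fin 2) (Fin 2) ℤ) 1 1 : ℂ) ≠ 0 := by
  set C : ℤ := (γ : Matrix (Fin 2) (Fin 2) ℤ) 1 0 with hC
  set D : ℤ := (γ : Matrix (Fin 2) (Fin 2) ℤ) 1 1 with hD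
  intro H
  rcases eq_or_ne C 0 with h0 | h0
  · rw [h0] at H
    simp only [Int.cast_zero, zero_mul, zero_add, Int.cast_eq_zero] at H
    have hdet := γ.property
    rw [Matrix.det_fin_two] at hdet
    rw [← hC, ← hD] at hdet
    rw [h0, H] at hdet
    simp at hdet
  · have him : (((C : ℂ)) * z + (D : ℂ)).im = (C : ℝ) * z.im := by
      simp [Complex.add_im, Complex.mul_im]
    rw [H] at him
    simp only [Complex.zero_im] at him
    have h1 : (C : ℝ) ≠ 0 := Int.cast_ne_zero.mpr h0
    exact (mul_ne_zero h1 (ne_of_gt hz)) him.symm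

/-- A holomorphic function on the upper half-plane that is modular of weight 2
for `SL₂(ℤ)` and has a Fourier expansion `∑ₙ a(n) e^{2πinτ}` with only finitely
many negative terms (a weakly holomorphic modular form of weight 2 and level
one) has vanishing constant term: `a 0 = 0`. -/
theorem constant_term_eq_zero_of_weakly_holomorphic_weight_two
    (h : ℍ → ℂ)
    (hhol : MDifferentiable 𝓘(ℂ) 𝓘(ℂ) h)
    (hmod : ∀ γ : SL(2, ℤ), ∀ τ : ℍ,
      h (γ • τ)
        = (((γ : Matrix (Fin 2) (Fin 2) ℤ) 1 0 : ℂ) * (τ : ℂ)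
            + ((γ : Matrix (Fin 2) (Fin 2) ℤ) 1 1 : ℂ)) ^ 2 * h τ)
    (M : ℕ) (a : ℤ → ℂ)
    (hbound : ∀ n : ℤ, n < -(M : ℤ) → a n = 0)
    (hsum : ∀ τ : ℍ,
      HasSum (fun n : ℤ =>
        a n * Complex.exp (2 * (π : ℂ) * Complex.I * (n : ℂ) * (τ : ℂ))) (h τ)) :
    a 0 = 0 := by
  classical
  set F : ℤ → ℂ → ℂ := fun n z =>
    if n = 0 then a 0 * z
    else a n * (2 * (π:ℂ) * Complex.I * (n:ℂ))⁻¹ *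
      Complex.exp (2 * (π:ℂ) * Complex.I * (n:ℂ) * z) with hF
  have hπI : (2 * (π:ℂ) * Complex.I) ≠ 0 := by
    simp [Real.pi_ne_zero, Complex.I_ne_zero, Complex.ofReal_ne_zero]
  have hFder : ∀ (n : ℤ) (z : ℂ),
      HasDerivAt (F n) (a n * Complex.exp (2 * (π:ℂ) * Complex.I * (n:ℂ) * z)) z := by
    intro n z
    rcases eq_or_ne n 0 with rfl | hn
    · simpa [hF] using (hasDerivAt_id z).const_mul (a 0)
    · have hc : (2 * (π:ℂ) * Complex.I * (n:ℂ)) ≠ 0 :=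
        mul_ne_zero hπI (Int.cast_ne_zero.mpr hn)
      have h1 : HasDerivAt (fun z : ℂ => (2 * (π:ℂ) * Complex.I * (n:ℂ)) * z)
          (2 * (π:ℂ) * Complex.I * (n:ℂ)) z := by
        simpa using (hasDerivAt_id z).const_mul (2 * (π:ℂ) * Complex.I * (n:ℂ))
      have h3 := h1.cexp.const_mul (a n * (2 * (π:ℂ) * Complex.I * (n:ℂ))⁻¹)
      have heq : F n = fun z : ℂ => a n * (2 * (π:ℂ) * Complex.I * (n:ℂ))⁻¹ *
          Complex.exp (2 * (π:ℂ) * Complex.I * (n:ℂ) * z) := by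
        funext w; simp [hF, hn]
      rw [heq]
      refine h3.congr_deriv ?_
      field_simp
  have hnorm : ∀ τ : ℍ, Summable (fun n : ℤ =>
      ‖a n‖ * Real.exp (-(2 * π * n * (τ:ℂ).im))) := by
    intro τ
    have h1 := summable_norm_iff.mpr (hsum τ).summable
    refine h1.congr fun n => ?_
    rw [norm_mul, aux_norm_exp]
  have hFsummable : ∀ τ : ℍ, Summable (fun n : ℤ => F n (τ:ℂ)) := by
    intro τ
    have hbase := hnorm τ
    have h1 : Summable (fun n : ℤ =>
        if n = 0 then (0:ℂ) else a n * (2 * (π:ℂ) * Complex.I * (n:ℂ))⁻¹ *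
          Complex.exp (2 * (π:ℂ) * Complex.I * (n:ℂ) * (τ:ℂ))) := by
      refine Summable.of_norm_bounded hbase fun n => ?_
      rcases eq_or_ne n 0 with rfl | hn
      · simp
      · simp only [hn, if_false]
        rw [norm_mul, norm_mul, aux_norm_exp]
        have h2π : (1:ℝ) ≤ ‖(2 * (π:ℂ) * Complex.I * (n:ℂ))‖ := by
          rw [norm_mul, norm_mul, norm_mul]
          simp only [Complex.norm_ofNat, Complex.norm_real, Real.norm_eq_abs,
            Complex.norm_I, mul_one, Complex.norm_intCast]
          rw [abs_of_nonneg Real.pi_pos.le]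
          have h1n : (1:ℝ) ≤ |(n:ℝ)| := by
            rw [← Int.cast_abs]
            exact_mod_cast Int.one_le_abs hn
          have h2 : (1:ℝ) ≤ 2 * π := by nlinarith [Real.pi_gt_three]
          calc (1:ℝ) = 1 * 1 := by ring
            _ ≤ (2 * π) * |(n:ℝ)| := by
                exact mul_le_mul h2 h1n zero_le_one (by positivity)
        have hinv : ‖(2 * (π:ℂ) * Complex.I * (n:ℂ))⁻¹‖ ≤ 1 := by
          rw [norm_inv]
          exact inv_le_one_of_one_le₀ h2π
        calc ‖a n‖ * ‖(2 * (π:ℂ) * Complex.I * (n:ℂ))⁻¹‖ *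
              Real.exp (-(2 * π * n * (τ:ℂ).im))
            ≤ ‖a n‖ * 1 * Real.exp (-(2 * π * n * (τ:ℂ).im)) := by gcongr
          _ = ‖a n‖ * Real.exp (-(2 * π * n * (τ:ℂ).im)) := by ring
    have h2 : Summable (fun n : ℤ => if n = 0 then a 0 * (τ:ℂ) else (0:ℂ)) := by
      apply summable_of_ne_finset_zero (s := {0})
      intro n hn
      simp only [Finset.mem_singleton] at hn
      simp [hn]
    refine (h2.add h1).congr fun n => ?_
    rcases eq_or_ne n 0 with rfl | hn
    · simp [hF]
    · simp [hF, hn]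
  set Φ : ℂ → ℂ := fun z => ∑' n : ℤ, F n z with hΦdef
  have hΦ : ∀ τ : ℍ, HasDerivAt Φ (h τ) (τ:ℂ) := by
    intro τ
    set c : ℝ := (τ:ℂ).im / 2 with hc
    set Cb : ℝ := (τ:ℂ).im + 1 with hCb
    have hτim : 0 < (τ:ℂ).im := τ.coe_im_pos
    have hc0 : 0 < c := by positivity
    set t : Set ℂ := {z | c < z.im ∧ z.im < Cb} with ht
    have htopen : IsOpen t :=
      (isOpen_lt continuous_const Complex.continuous_im).inter
        (isOpen_lt Complex.continuous_im continuous_const)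
    have htpre : IsPreconnected t :=
      ((convex_halfSpace_im_gt c).inter (convex_halfSpace_im_lt Cb)).isPreconnected
    have hτt : (τ:ℂ) ∈ t := by
      constructor
      · show c < (τ:ℂ).im
        rw [hc]; linarith
      · show (τ:ℂ).im < Cb
        rw [hCb]; linarith
    set τ₀ : ℍ := ⟨⟨0, c⟩, hc0⟩ with hτ₀
    set u : ℤ → ℝ := fun n =>
      (1 + Real.exp (2 * π * M * Cb)) * (‖a n‖ * Real.exp (-(2 * π * n * c))) with hu
    have hu_summable : Summable u := by
      have h0 : (τ₀:ℂ).im = c := rfl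
      have hb := hnorm τ₀
      rw [h0] at hb
      exact hb.mul_left _
    have hbound' : ∀ (n : ℤ) (z : ℂ), z ∈ t →
        ‖a n * Complex.exp (2 * (π:ℂ) * Complex.I * (n:ℂ) * z)‖ ≤ u n := by
      intro n z hz
      have hEpos : (0:ℝ) < Real.exp (2 * π * M * Cb) := Real.exp_pos _
      rw [norm_mul, aux_norm_exp]
      rcases lt_or_ge n (-(M:ℤ)) with hn | hn
      · rw [hbound n hn]
        simp only [norm_zero, zero_mul, hu, mul_zero]
        positivity
      rcases le_or_gt 0 n with hn0 | hn0
      · have hmono : Real.exp (-(2 * π * n * z.im)) ≤ Real.exp (-(2 * π * n * c)) := by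
          apply Real.exp_le_exp.mpr
          have h1 : (0:ℝ) ≤ 2 * π * n := by
            have : (0:ℝ) ≤ (n:ℝ) := by exact_mod_cast hn0
            positivity
          nlinarith [hz.1]
        calc ‖a n‖ * Real.exp (-(2 * π * n * z.im))
            ≤ ‖a n‖ * Real.exp (-(2 * π * n * c)) :=
              mul_le_mul_of_nonneg_left hmono (norm_nonneg _)
          _ ≤ u n := by
              simp only [hu]
              nlinarith [mul_nonneg hEpos.le
                (mul_nonneg (norm_nonneg (a n)) (Real.exp_pos (-(2 * π * n * c))).le)]
      · have hnneg : (n:ℝ) < 0 := by exact_mod_cast hn0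
        have hnM : -(M:ℝ) ≤ (n:ℝ) := by exact_mod_cast hn
        have h1 : Real.exp (-(2 * π * n * z.im)) ≤ Real.exp (2 * π * M * Cb) := by
          apply Real.exp_le_exp.mpr
          have h3 : (0:ℝ) < -(2 * π * n) := by nlinarith [Real.pi_pos]
          have h2 : -(2 * π * (n:ℝ)) ≤ 2 * π * M := by nlinarith [Real.pi_pos]
          have h4 : z.im < Cb := hz.2
          have h5 : 0 < z.im := lt_trans hc0 hz.1
          have h6 : 0 < Cb := lt_trans h5 h4
          nlinarith
        have h7 : (1:ℝ) ≤ Real.exp (-(2 * π * n * c)) := by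
          rw [Real.one_le_exp_iff]
          nlinarith [mul_pos (mul_pos (mul_pos two_pos Real.pi_pos) hc0)
            (neg_pos.mpr hnneg)]
        calc ‖a n‖ * Real.exp (-(2 * π * n * z.im))
            ≤ ‖a n‖ * Real.exp (2 * π * M * Cb) :=
              mul_le_mul_of_nonneg_left h1 (norm_nonneg _)
          _ ≤ u n := by
              simp only [hu]
              nlinarith [mul_nonneg (norm_nonneg (a n)) (Real.exp_pos (-(2 * π * n * c))).le,
                mul_nonneg (mul_nonneg hEpos.le (norm_nonneg (a n))) (sub_nonneg.mpr h7),
                mul_nonneg (norm_nonneg (a n)) hEpos.le]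
    have hder := hasDerivAt_tsum_of_isPreconnected hu_summable htopen htpre
      (fun n y _ => hFder n y) (fun n y hy => hbound' n y hy) hτt (hFsummable τ) hτt
    rw [(hsum τ).tsum_eq] at hder
    exact hder
  -- the cocycle map
  set S : Set ℂ := {z | 0 < z.im} with hS
  have hSopen : IsOpen S := isOpen_lt continuous_const Complex.continuous_im
  have hSconv : Convex ℝ S := convex_halfSpace_im_gt 0
  set ψ : SL(2, ℤ) → ℂ → ℂ := fun γ z =>
    Φ ((((γ : Matrix (Fin 2) (Fin 2) ℤ) 0 0 : ℂ) * z + ((γ : Matrix (Fin 2) (Fin 2) ℤ) 0 1 : ℂ))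
        / (((γ : Matrix (Fin 2) (Fin 2) ℤ) 1 0 : ℂ) * z
            + ((γ : Matrix (Fin 2) (Fin 2) ℤ) 1 1 : ℂ))) - Φ z with hψ
  have hψder : ∀ γ : SL(2, ℤ), ∀ z ∈ S, HasDerivAt (ψ γ) 0 z := by
    intro γ z hz
    set τz : ℍ := ⟨z, hz⟩ with hτz
    set A : ℂ := ((γ : Matrix (Fin 2) (Fin 2) ℤ) 0 0 : ℂ) with hA
    set B : ℂ := ((γ : Matrix (Fin 2) (Fin 2) ℤ) 0 1 : ℂ) with hB
    set C : ℂ := ((γ : Matrix (Fin 2) (Fin 2) ℤ) 1 0 : ℂ) with hC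
    set D : ℂ := ((γ : Matrix (Fin 2) (Fin 2) ℤ) 1 1 : ℂ) with hD
    have hden : C * z + D ≠ 0 := aux_denom_ne_zero γ z hz
    have hdet : A * D - B * C = 1 := by
      have hd := γ.property
      rw [Matrix.det_fin_two] at hd
      rw [hA, hB, hC, hD]
      exact_mod_cast congrArg (Int.cast : ℤ → ℂ) hd
    have hm : HasDerivAt (fun w : ℂ => (A * w + B) / (C * w + D)) (((C * z + D) ^ 2)⁻¹) z := by
      have h1 : HasDerivAt (fun w : ℂ => A * w + B) A z := by
        simpa using ((hasDerivAt_id z).const_mul A).add_const B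
      have h2 : HasDerivAt (fun w : ℂ => C * w + D) C z := by
        simpa using ((hasDerivAt_id z).const_mul C).add_const D
      have h3 := h1.div h2 hden
      have hkey : A * (C * z + D) - (A * z + B) * C = 1 := by linear_combination hdet
      rw [hkey] at h3
      rw [← one_div]
      exact h3
    have hmob : ((γ • τz : ℍ) : ℂ) = (A * z + B) / (C * z + D) := aux_coe_smul γ τz
    have houter := hΦ (γ • τz)
    rw [hmob] at houter
    have hcomp := HasDerivAt.comp z houter hm
    have hsub := hcomp.sub (hΦ τz)
    have hval : h (γ • τz) * ((C * z + D) ^ 2)⁻¹ - h τz = 0 := by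
      rw [hmod γ τz]
      have hcoe : (τz : ℂ) = z := rfl
      rw [hcoe, ← hC, ← hD]
      field_simp
      ring
    rw [hval] at hsub
    exact hsub
  -- ψ γ is constant on S
  have hconst : ∀ γ : SL(2, ℤ), ∀ z₁ ∈ S, ∀ z₂ ∈ S, ψ γ z₁ = ψ γ z₂ := by
    intro γ z₁ hz₁ z₂ hz₂
    refine hSconv.is_const_of_fderivWithin_eq_zero
      (fun z hz => ((hψder γ z hz).differentiableAt).differentiableWithinAt)
      (fun z hz => ?_) hz₁ hz₂
    rw [fderivWithin_of_isOpen hSopen hz, (hψder γ z hz).hasFDerivAt.fderiv]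
    ext
    simp
  -- the cocycle
  set K : SL(2, ℤ) → ℂ := fun γ =>
    Φ ((γ • UpperHalfPlane.I : ℍ) : ℂ) - Φ ((UpperHalfPlane.I : ℍ) : ℂ) with hK
  have hmemS : ∀ τ : ℍ, ((τ : ℂ)) ∈ S := fun τ => τ.coe_im_pos
  have hKeq : ∀ γ : SL(2, ℤ),
      K γ = Φ ((γ • UpperHalfPlane.I : ℍ) : ℂ) - Φ ((UpperHalfPlane.I : ℍ) : ℂ) :=
    fun γ => rfl
  have hψeq : ∀ (γ : SL(2, ℤ)) (τ : ℍ), ψ γ (τ:ℂ) = Φ ((γ • τ : ℍ) : ℂ) - Φ (τ:ℂ) := by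
    intro γ τ
    rw [aux_coe_smul γ τ]
  have hkey : ∀ (γ : SL(2, ℤ)) (τ : ℍ), Φ ((γ • τ : ℍ) : ℂ) - Φ (τ:ℂ) = K γ := by
    intro γ τ
    rw [← hψeq γ τ, hKeq γ, ← hψeq γ UpperHalfPlane.I]
    exact hconst γ _ (hmemS τ) _ (hmemS UpperHalfPlane.I)
  have hKmul : ∀ γ δ : SL(2, ℤ), K (γ * δ) = K γ + K δ := by
    intro γ δ
    have h2 := hkey γ (δ • UpperHalfPlane.I)
    rw [hKeq γ] at h2
    rw [hKeq (γ * δ), hKeq γ, hKeq δ, mul_smul]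
    linear_combination h2
  have hK1 : K 1 = 0 := by
    rw [hKeq, one_smul, sub_self]
  have hKpow : ∀ (γ : SL(2, ℤ)) (k : ℕ), K (γ ^ k) = k * K γ := by
    intro γ k
    induction k with
    | zero => simpa using hK1
    | succ m ih =>
        rw [pow_succ, hKmul, ih]
        push_cast
        ring
  have hKS : K ModularGroup.S = 0 := by
    have := hKpow ModularGroup.S 4
    rw [aux_S_pow_four, hK1] at this
    have h4 : ((4:ℕ):ℂ) ≠ 0 := by norm_num
    field_simp at this
    exact (mul_eq_zero.mp this.symm).resolve_left h4
  have hKST : K (ModularGroup.S * ModularGroup.T) = 0 := by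
    have := hKpow (ModularGroup.S * ModularGroup.T) 6
    rw [aux_ST_pow_six, hK1] at this
    field_simp at this
    exact (mul_eq_zero.mp this.symm).resolve_left (by norm_num : ((6:ℕ):ℂ) ≠ 0)
  have hKT : K ModularGroup.T = 0 := by
    have := hKmul ModularGroup.S ModularGroup.T
    rw [hKST, hKS] at this
    linear_combination -this
  -- K T = a 0
  have hshift : ∀ z : ℂ, 0 < z.im → Φ (z + 1) = Φ z + a 0 := by
    intro z hz
    have hsummF : Summable (fun n : ℤ => F n z) := hFsummable ⟨z, hz⟩
    have hδ : Summable (fun n : ℤ => if n = 0 then a 0 else (0:ℂ)) := by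
      apply summable_of_ne_finset_zero (s := {0})
      intro n hn
      simp only [Finset.mem_singleton] at hn
      simp [hn]
    have hterm : ∀ n : ℤ, F n (z + 1) = F n z + (if n = 0 then a 0 else 0) := by
      intro n
      rcases eq_or_ne n 0 with rfl | hn
      · simp [hF]; ring
      · simp only [hF, hn, if_false, add_zero]
        congr 1
        rw [mul_add, mul_one, Complex.exp_add]
        have : Complex.exp (2 * (π:ℂ) * Complex.I * (n:ℂ)) = 1 := by
          have := Complex.exp_int_mul_two_pi_mul_I n
          rw [← this]
          congr 1
          ring
        rw [this, mul_one]
    calc Φ (z + 1) = ∑' n : ℤ, F n (z + 1) := rfl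
      _ = ∑' n : ℤ, (F n z + (if n = 0 then a 0 else 0)) := by
          exact tsum_congr hterm
      _ = (∑' n : ℤ, F n z) + ∑' n : ℤ, (if n = 0 then a 0 else 0) := by
          exact Summable.tsum_add hsummF hδ
      _ = Φ z + a 0 := by
          rw [tsum_ite_eq]
  have hTI : ((ModularGroup.T • UpperHalfPlane.I : ℍ) : ℂ) = ((UpperHalfPlane.I : ℍ) : ℂ) + 1 := by
    rw [UpperHalfPlane.modular_T_smul]
    simp [UpperHalfPlane.coe_vadd]
    ring
  have : K ModularGroup.T = a 0 := by
    rw [hKeq, hTI, hshift _ (hmemS UpperHalfPlane.I)]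
    ring
  rw [← this, hKT]
end
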